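/- Let U ⊆ ℝ² be open and connected and let (E_mn)_{1≤m,n≤3} be a symmetric matrix field of smooth real-valued functions on U, regarded as a z-independent (2D) strain (indices 1,2 are planar, index 3 is z, and ∂₃E_mn = 0). Then the full three-dimensional incompatibility tensor η_ik = ε_ipm ε_kqn ∂_p∂_q E_mn vanishes identically on U if and only if there exist real constants K, a₁, a₂, b such that on U: (i) ∂₂²E₁₁ + ∂₁²E₂₂ − 2∂₁∂₂E₁₂ = 0; (ii) ∂₁E₂₃ − ∂₂E₁₃ = K; and (iii) E₃₃(x₁,x₂) = a₁x₁ + a₂x₂ + b. -/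

import Mathlib

open MeasureTheory Real

/-- Partial derivative in the `α`-th coordinate direction of a function on `ℝ²`. -/
noncomputable def pd (α : Fin 2) (f : EuclideanSpace ℝ (Fin 2) → ℝ) :
    EuclideanSpace ℝ (Fin 2) → ℝ :=
  fun x => fderiv ℝ f x (EuclideanSpace.single α 1)

/-- The three-dimensional partial derivative `∂_p` acting on a `z`-independent (2D)
field: for the planar indices `p = 0, 1` it is the planar partial derivative, and
`∂_z = ∂₂` vanishes identically. -/
noncomputable def pdz (p : Fin 3) (f : EuclideanSpace ℝ (Fin 2) → ℝ) :
    EuclideanSpace ℝ (Fin 2) → ℝ :=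
  if h : (p : ℕ) < 2 then pd ⟨(p : ℕ), h⟩ f else 0

/-- The Levi-Civita symbol `ε_ijk` on `{0,1,2}`. -/
noncomputable def lc (i j k : Fin 3) : ℝ :=
  (((j : ℕ) : ℝ) - ((i : ℕ) : ℝ)) * (((k : ℕ) : ℝ) - ((j : ℕ) : ℝ))
    * (((k : ℕ) : ℝ) - ((i : ℕ) : ℝ)) / 2

/-- The full 3D incompatibility tensor `η_ik = ε_ipm ε_kqn ∂_p ∂_q E_mn` of a
`z`-independent strain. -/
noncomputable def eta2D (Em : Fin 3 → Fin 3 → EuclideanSpace ℝ (Fin 2) → ℝ)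
    (i k : Fin 3) : EuclideanSpace ℝ (Fin 2) → ℝ :=
  fun x => ∑ p, ∑ m, ∑ q, ∑ n, lc i p m * lc k q n * pdz p (pdz q (Em m n)) x

section Auxiliary

local notation "E2" => EuclideanSpace ℝ (Fin 2)

lemma fdz (x : E2) : fderiv ℝ (0 : E2 → ℝ) x = 0 := fderiv_const_apply 0

variable {Em : Fin 3 → Fin 3 → E2 → ℝ} {x : E2}

lemma eta00 : eta2D Em 0 0 x = pd 1 (pd 1 (Em 2 2)) x := by
  simp only [eta2D, Fin.sum_univ_three, pdz, lc]; norm_num [pd, fdz]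
lemma eta01 : eta2D Em 0 1 x = -pd 1 (pd 0 (Em 2 2)) x := by
  simp only [eta2D, Fin.sum_univ_three, pdz, lc]; norm_num [pd, fdz]
lemma eta10 : eta2D Em 1 0 x = -pd 0 (pd 1 (Em 2 2)) x := by
  simp only [eta2D, Fin.sum_univ_three, pdz, lc]; norm_num [pd, fdz]
lemma eta11 : eta2D Em 1 1 x = pd 0 (pd 0 (Em 2 2)) x := by
  simp only [eta2D, Fin.sum_univ_three, pdz, lc]; norm_num [pd, fdz]
lemma eta02 : eta2D Em 0 2 x = pd 1 (pd 0 (Em 2 1)) x - pd 1 (pd 1 (Em 2 0)) x := by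
  simp only [eta2D, Fin.sum_univ_three, pdz, lc]; norm_num [pd, fdz]; ring
lemma eta20 : eta2D Em 2 0 x = pd 0 (pd 1 (Em 1 2)) x - pd 1 (pd 1 (Em 0 2)) x := by
  simp only [eta2D, Fin.sum_univ_three, pdz, lc]; norm_num [pd, fdz]; ring
lemma eta12 : eta2D Em 1 2 x = -pd 0 (pd 0 (Em 2 1)) x + pd 0 (pd 1 (Em 2 0)) x := by
  simp only [eta2D, Fin.sum_univ_three, pdz, lc]; norm_num [pd, fdz]
lemma eta21 : eta2D Em 2 1 x = -pd 0 (pd 0 (Em 1 2)) x + pd 1 (pd 0 (Em 0 2)) x := by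
  simp only [eta2D, Fin.sum_univ_three, pdz, lc]; norm_num [pd, fdz]
lemma eta22 : eta2D Em 2 2 x = pd 1 (pd 1 (Em 0 0)) x + pd 0 (pd 0 (Em 1 1)) x
    - pd 0 (pd 1 (Em 1 0)) x - pd 1 (pd 0 (Em 0 1)) x := by
  simp only [eta2D, Fin.sum_univ_three, pdz, lc]; norm_num [pd, fdz]; ring

lemma clm_apply_eq (L : E2 →L[ℝ] ℝ) (v : E2) :
    L v = v 0 * L (EuclideanSpace.single 0 1) + v 1 * L (EuclideanSpace.single 1 1) := by
  have hv : v = v 0 • EuclideanSpace.single 0 (1:ℝ) + v 1 • EuclideanSpace.single 1 1 := by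
    ext i
    fin_cases i <;> simp [EuclideanSpace.single_apply]
  calc L v = L (v 0 • EuclideanSpace.single 0 (1:ℝ) + v 1 • EuclideanSpace.single 1 1) := by
        rw [← hv]
    _ = _ := by rw [map_add, L.map_smul, L.map_smul]; simp [smul_eq_mul]

lemma fderiv_eq_zero_of_pd {f : E2 → ℝ} {x : E2}
    (h0 : pd 0 f x = 0) (h1 : pd 1 f x = 0) : fderiv ℝ f x = 0 := by
  ext v
  rw [ContinuousLinearMap.zero_apply, clm_apply_eq]
  simp only [pd] at h0 h1
  rw [h0, h1]; ring

lemma pd_congr_nhds {f g : E2 → ℝ} {x : E2} (h : f =ᶠ[nhds x] g) (α : Fin 2) :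
    pd α f x = pd α g x := by simp [pd, h.fderiv_eq]

lemma pd_const (c : ℝ) (α : Fin 2) (x : E2) : pd α (fun _ => c) x = 0 := by
  simp [pd]

lemma affine_hasFDerivAt (a₁ a₂ b : ℝ) (x : E2) :
    HasFDerivAt (fun y : E2 => a₁ * y 0 + a₂ * y 1 + b)
      (a₁ • (EuclideanSpace.proj 0 : E2 →L[ℝ] ℝ) + a₂ • (EuclideanSpace.proj 1 : E2 →L[ℝ] ℝ)) x := by
  have h0 : HasFDerivAt (fun y : E2 => y 0) (EuclideanSpace.proj (𝕜 := ℝ) (0 : Fin 2)) x :=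
    (EuclideanSpace.proj (𝕜 := ℝ) (0 : Fin 2)).hasFDerivAt
  have h1 : HasFDerivAt (fun y : E2 => y 1) (EuclideanSpace.proj (𝕜 := ℝ) (1 : Fin 2)) x :=
    (EuclideanSpace.proj (𝕜 := ℝ) (1 : Fin 2)).hasFDerivAt
  exact ((h0.const_mul a₁).add (h1.const_mul a₂)).add_const b

lemma pd_affine (a₁ a₂ b : ℝ) (α : Fin 2) (x : E2) :
    pd α (fun y => a₁ * y 0 + a₂ * y 1 + b) x = if α = 0 then a₁ else a₂ := by
  rw [pd, (affine_hasFDerivAt a₁ a₂ b x).fderiv]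
  fin_cases α <;> simp [EuclideanSpace.single_apply]

lemma pd_contDiffOn {f : E2 → ℝ} {U : Set E2} (hU : IsOpen U)
    (hf : ContDiffOn ℝ (⊤ : ℕ∞) f U) (α : Fin 2) : ContDiffOn ℝ (⊤ : ℕ∞) (pd α f) U := by
  have h := hf.fderiv_of_isOpen hU (m := (⊤ : ℕ∞)) (by simp)
  exact h.clm_apply contDiffOn_const

lemma diffAt_of_contDiffOn {f : E2 → ℝ} {U : Set E2} (hU : IsOpen U)
    (hf : ContDiffOn ℝ (⊤ : ℕ∞) f U) {x : E2} (hx : x ∈ U) : DifferentiableAt ℝ f x :=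
  ((hf.contDiffAt (hU.mem_nhds hx)).differentiableAt (by simp))

lemma pd_sub {f g : E2 → ℝ} {x : E2} (hf : DifferentiableAt ℝ f x)
    (hg : DifferentiableAt ℝ g x) (α : Fin 2) :
    pd α (fun y => f y - g y) x = pd α f x - pd α g x := by
  simp [pd, fderiv_fun_sub hf hg]

lemma schwarz {f : E2 → ℝ} {U : Set E2} (hU : IsOpen U)
    (hf : ContDiffOn ℝ (⊤ : ℕ∞) f U) {x : E2} (hx : x ∈ U) (α β : Fin 2) :
    pd α (pd β f) x = pd β (pd α f) x := by
  have hca : ContDiffAt ℝ (⊤ : ℕ∞) f x := hf.contDiffAt (hU.mem_nhds hx)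
  have hd : DifferentiableAt ℝ (fderiv ℝ f) x :=
    (hca.fderiv_right (m := (⊤ : ℕ∞)) (by simp)).differentiableAt (by simp)
  have key : ∀ γ δ : Fin 2, pd γ (pd δ f) x
      = fderiv ℝ (fderiv ℝ f) x (EuclideanSpace.single γ 1) (EuclideanSpace.single δ 1) := by
    intro γ δ
    have : pd γ (pd δ f) x
        = fderiv ℝ (fun y => (fderiv ℝ f y) (EuclideanSpace.single δ 1)) x
            (EuclideanSpace.single γ 1) := rfl
    rw [this, fderiv_clm_apply hd (differentiableAt_const _)]
    simp
  rw [key α β, key β α]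
  have hsymm := hca.isSymmSndFDerivAt (n := (⊤ : ℕ∞))
    (by simp [minSmoothness_of_isRCLikeNormedField]; exact WithTop.coe_le_coe.mpr (le_top : (2:ℕ∞) ≤ ⊤))
  exact hsymm _ _

lemma const_on_of_fderiv_zero {f : E2 → ℝ} {U : Set E2} (hU : IsOpen U)
    (hconn : IsPreconnected U) (hd : DifferentiableOn ℝ f U)
    (h0 : ∀ x ∈ U, fderiv ℝ f x = 0) {x y : E2} (hx : x ∈ U) (hy : y ∈ U) :
    f x = f y := by
  have hloc : ∀ z ∈ U, ∃ ε > 0, Metric.ball z ε ⊆ U ∧ ∀ w ∈ Metric.ball z ε, f w = f z := by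
    intro z hz
    obtain ⟨ε, hε, hball⟩ := Metric.isOpen_iff.1 hU z hz
    refine ⟨ε, hε, hball, fun w hw => ?_⟩
    refine (convex_ball z ε).is_const_of_fderivWithin_eq_zero
      (hd.mono hball) (fun u hu => ?_) hw (Metric.mem_ball_self hε)
    rw [fderivWithin_of_isOpen Metric.isOpen_ball hu]
    exact h0 u (hball hu)
  set S : Set E2 := {z | z ∈ U ∧ f z = f x} with hS
  set T : Set E2 := {z | z ∈ U ∧ f z ≠ f x} with hT
  have hSopen : IsOpen S := by
    rw [Metric.isOpen_iff]
    rintro z ⟨hzU, hzf⟩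
    obtain ⟨ε, hε, hball, hconst⟩ := hloc z hzU
    exact ⟨ε, hε, fun w hw => ⟨hball hw, (hconst w hw).trans hzf⟩⟩
  have hTopen : IsOpen T := by
    rw [Metric.isOpen_iff]
    rintro z ⟨hzU, hzf⟩
    obtain ⟨ε, hε, hball, hconst⟩ := hloc z hzU
    exact ⟨ε, hε, fun w hw => ⟨hball hw, (hconst w hw).symm ▸ hzf⟩⟩
  by_contra hne
  have hsub : U ⊆ S ∪ T := fun z hz => by
    by_cases h : f z = f x
    · exact Or.inl ⟨hz, h⟩
    · exact Or.inr ⟨hz, h⟩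
  have h1 : (U ∩ S).Nonempty := ⟨x, hx, hx, rfl⟩
  have h2 : (U ∩ T).Nonempty := ⟨y, hy, hy, fun h => hne h.symm⟩
  obtain ⟨z, _, ⟨_, hz1⟩, ⟨_, hz2⟩⟩ := hconn S T hSopen hTopen hsub h1 h2
  exact hz2 hz1

end Auxiliary

/-- **2D compatibility characterization (equations (1.3) of the paper):** on an open
connected planar domain, the full 3D incompatibility of a smooth `z`-independent
symmetric strain vanishes iff the three planar compatibility conditions hold with
suitable constants `K, a₁, a₂, b`. -/
theorem compatibility_2D_characterization (U : Set (EuclideanSpace ℝ (Fin 2)))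
    (hU : IsOpen U) (hconn : IsConnected U)
    (Em : Fin 3 → Fin 3 → EuclideanSpace ℝ (Fin 2) → ℝ)
    (hE : ∀ i j, ContDiffOn ℝ (⊤ : ℕ∞) (Em i j) U)
    (hsym : ∀ i j, Em i j = Em j i) :
    (∀ x ∈ U, ∀ i k, eta2D Em i k x = 0) ↔
    ∃ K a₁ a₂ b : ℝ, ∀ x ∈ U,
      (pd 1 (pd 1 (Em 0 0)) x + pd 0 (pd 0 (Em 1 1)) x
        - 2 * pd 0 (pd 1 (Em 0 1)) x = 0) ∧
      (pd 0 (Em 1 2) x - pd 1 (Em 0 2) x = K) ∧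
      (Em 2 2 x = a₁ * x 0 + a₂ * x 1 + b) := by
  have hP := hconn.isPreconnected
  constructor
  · intro hη
    obtain ⟨x₀, hx₀⟩ := hconn.nonempty
    -- all second partials of E₃₃ vanish on U
    have hE22 : ∀ x ∈ U, ∀ α β : Fin 2, pd α (pd β (Em 2 2)) x = 0 := by
      intro x hx α β
      fin_cases α <;> fin_cases β <;> beta_reduce <;> simp only [Fin.zero_eta, Fin.mk_one]
      · have := hη x hx 1 1; rwa [eta11] at this
      · have := hη x hx 1 0; rw [eta10] at this; linarith
      · have := hη x hx 0 1; rw [eta01] at this; linarith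
      · have := hη x hx 0 0; rwa [eta00] at this
    have hEdiff : ∀ β : Fin 2, ContDiffOn ℝ (⊤ : ℕ∞) (pd β (Em 2 2)) U :=
      fun β => pd_contDiffOn hU (hE 2 2) β
    set a₁ := pd 0 (Em 2 2) x₀ with ha₁
    set a₂ := pd 1 (Em 2 2) x₀ with ha₂
    have hconst : ∀ β : Fin 2, ∀ x ∈ U, pd β (Em 2 2) x = pd β (Em 2 2) x₀ := by
      intro β x hx
      refine const_on_of_fderiv_zero hU hP ((hEdiff β).differentiableOn (by simp))
        (fun z hz => fderiv_eq_zero_of_pd (hE22 z hz 0 β) (hE22 z hz 1 β)) hx hx₀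
    -- the planar part of condition (ii): the field K is constant
    have hgpd : ∀ x ∈ U, ∀ α : Fin 2,
        pd α (fun y => pd 0 (Em 1 2) y - pd 1 (Em 0 2) y) x = 0 := by
      intro x hx α
      have d1 : DifferentiableAt ℝ (pd 0 (Em 1 2)) x :=
        diffAt_of_contDiffOn hU (pd_contDiffOn hU (hE 1 2) 0) hx
      have d2 : DifferentiableAt ℝ (pd 1 (Em 0 2)) x :=
        diffAt_of_contDiffOn hU (pd_contDiffOn hU (hE 0 2) 1) hx
      rw [pd_sub d1 d2]
      fin_cases α <;> beta_reduce <;> simp only [Fin.zero_eta, Fin.mk_one]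
      · have := hη x hx 1 2; rw [eta12, hsym 2 1, hsym 2 0] at this; linarith
      · have := hη x hx 0 2; rw [eta02, hsym 2 1, hsym 2 0] at this; linarith
    have hgconst : ∀ x ∈ U,
        pd 0 (Em 1 2) x - pd 1 (Em 0 2) x = pd 0 (Em 1 2) x₀ - pd 1 (Em 0 2) x₀ := by
      intro x hx
      exact const_on_of_fderiv_zero hU hP
        (((pd_contDiffOn hU (hE 1 2) 0).sub (pd_contDiffOn hU (hE 0 2) 1)).differentiableOn
          (by simp))
        (fun z hz => fderiv_eq_zero_of_pd (hgpd z hz 0) (hgpd z hz 1)) hx hx₀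
    -- E₃₃ is affine
    have hhconst : ∀ x ∈ U,
        Em 2 2 x - (a₁ * x 0 + a₂ * x 1 + 0)
          = Em 2 2 x₀ - (a₁ * x₀ 0 + a₂ * x₀ 1 + 0) := by
      intro x hx
      refine const_on_of_fderiv_zero (f := fun y => Em 2 2 y - (a₁ * y 0 + a₂ * y 1 + 0))
        hU hP ?_ ?_ hx hx₀
      · exact fun z hz => ((diffAt_of_contDiffOn hU (hE 2 2) hz).sub
          ((affine_hasFDerivAt a₁ a₂ 0 z).differentiableAt)).differentiableWithinAt
      · intro z hz
        refine fderiv_eq_zero_of_pd ?_ ?_ <;>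
        · rw [pd_sub (diffAt_of_contDiffOn hU (hE 2 2) hz)
            ((affine_hasFDerivAt a₁ a₂ 0 z).differentiableAt), pd_affine, hconst _ z hz]
          simp [a₁, a₂]
    refine ⟨pd 0 (Em 1 2) x₀ - pd 1 (Em 0 2) x₀, a₁, a₂,
      Em 2 2 x₀ - (a₁ * x₀ 0 + a₂ * x₀ 1 + 0), ?_⟩
    intro x hx
    refine ⟨?_, hgconst x hx, ?_⟩
    · have := hη x hx 2 2
      rw [eta22, hsym 1 0] at this
      have hsw := schwarz hU (hE 0 1) hx 1 0
      linarith
    · have := hhconst x hx; linarith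
  · rintro ⟨K, a₁, a₂, b, hcond⟩ x hx i k
    -- facts about E₃₃
    have hEU : Set.EqOn (Em 2 2) (fun y => a₁ * y 0 + a₂ * y 1 + b) U :=
      fun y hy => (hcond y hy).2.2
    have hpdE22 : ∀ y ∈ U, ∀ β : Fin 2, pd β (Em 2 2) y = if β = 0 then a₁ else a₂ := by
      intro y hy β
      rw [pd_congr_nhds (Filter.eventuallyEq_of_mem (hU.mem_nhds hy) hEU) β, pd_affine]
    have hE22 : ∀ α β : Fin 2, pd α (pd β (Em 2 2)) x = 0 := by
      intro α β
      have h : pd β (Em 2 2) =ᶠ[nhds x] fun _ => if β = 0 then a₁ else a₂ :=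
        Filter.eventuallyEq_of_mem (hU.mem_nhds hx) (fun y hy => hpdE22 y hy β)
      rw [pd_congr_nhds h α, pd_const]
    -- facts about the K field
    have hgU : Set.EqOn (fun y => pd 0 (Em 1 2) y - pd 1 (Em 0 2) y) (fun _ => K) U :=
      fun y hy => (hcond y hy).2.1
    have hg : ∀ α : Fin 2, pd α (pd 0 (Em 1 2)) x - pd α (pd 1 (Em 0 2)) x = 0 := by
      intro α
      have d1 : DifferentiableAt ℝ (pd 0 (Em 1 2)) x :=
        diffAt_of_contDiffOn hU (pd_contDiffOn hU (hE 1 2) 0) hx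
      have d2 : DifferentiableAt ℝ (pd 1 (Em 0 2)) x :=
        diffAt_of_contDiffOn hU (pd_contDiffOn hU (hE 0 2) 1) hx
      rw [← pd_sub d1 d2 α,
        pd_congr_nhds (Filter.eventuallyEq_of_mem (hU.mem_nhds hx) hgU) α, pd_const]
    have sw01 := schwarz hU (hE 0 1) hx 0 1
    have sw12 := schwarz hU (hE 1 2) hx 0 1
    have sw02 := schwarz hU (hE 0 2) hx 0 1
    have h1 := (hcond x hx).1
    fin_cases i <;> fin_cases k <;> beta_reduce <;>
      simp only [Fin.zero_eta, Fin.mk_one, Fin.reduceFinMk]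
    · rw [eta00]; exact hE22 1 1
    · rw [eta01, hE22 1 0]; ring
    · rw [eta02, hsym 2 1, hsym 2 0]; exact hg 1
    · rw [eta10, hE22 0 1]; ring
    · rw [eta11]; exact hE22 0 0
    · rw [eta12, hsym 2 1, hsym 2 0]; linarith [hg 0]
    · rw [eta20]; linarith [hg 1, sw12]
    · rw [eta21]; linarith [hg 0, sw02]
    · rw [eta22, hsym 1 0]; linarith [h1, sw01]
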